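/- Let E : M_n(ℂ) → M_m(ℂ) be a linear map that is positive (it sends positive semidefinite matrices to positive semidefinite matrices) and satisfies the Schwarz inequality E(b)ᴴ E(b) ≤ E(bᴴ b) (Loewner order) for all b ∈ M_n(ℂ). Let p ∈ M_n(ℂ) be an orthogonal projection (pᴴ = p, p² = p) with E(1 − p) = 0. Then E(p a p) = E(a) for every a ∈ M_n(ℂ). (This is the paper's Theorem 3.5: a quantum Markov chain is reducible if and only if E_{0]}(I − p_{[n_0}) = 0 for some nontrivial projection; the statement here is its operative content for a completely positive map.) -/

import Mathlib

open Matrix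
open scoped ComplexOrder

lemma scalar_aux {A B : ℝ} (hB : 0 ≤ B) (h : ∀ t : ℝ, 0 ≤ t * A + t^2 * B) : A = 0 := by
  set t := -A / (B + 1) with htdef
  have hB1 : (0:ℝ) < B + 1 := by linarith
  have ht : t * (B + 1) = -A := div_mul_cancel₀ _ hB1.ne'
  have hA : A = -(t * B) - t := by linarith [ht]
  have h1 := h t
  have heq : t * A + t^2 * B = -t^2 := by rw [hA]; ring
  have ht2 : t ^ 2 = 0 := le_antisymm (by linarith) (sq_nonneg t)
  have ht0 : t = 0 := by
    have := pow_eq_zero_iff (n := 2) (by norm_num) |>.mp ht2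
    exact this
  rw [ht0] at ht; linarith

lemma quad_zero {m : ℕ} (M : Matrix (Fin m) (Fin m) ℂ)
    (h : ∀ x : Fin m → ℂ, star x ⬝ᵥ (M *ᵥ x) = 0) : M = 0 := by
  have hT : Matrix.toEuclideanLin M = 0 := by
    rw [← inner_map_self_eq_zero]
    intro x
    set y := (WithLp.equiv 2 (Fin m → ℂ)) x with hy
    have key : star (M *ᵥ y) ⬝ᵥ y = star (star y ⬝ᵥ (M *ᵥ y)) := by
      simp [dotProduct, mul_comm]
    rw [Matrix.toEuclideanLin_apply, EuclideanSpace.inner_eq_star_dotProduct]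
    change y ⬝ᵥ star (M *ᵥ y) = 0
    rw [dotProduct_comm, key, h y, star_zero]
  exact (Matrix.toEuclideanLin (𝕜 := ℂ)).injective (by simpa using hT)

lemma psd_family_zero {m : ℕ} (H K : Matrix (Fin m) (Fin m) ℂ)
    (h : ∀ t : ℝ, ((t:ℂ) • H + ((t:ℂ))^2 • K).PosSemidef) : H = 0 := by
  apply quad_zero
  intro x
  set a := star x ⬝ᵥ (H *ᵥ x) with ha
  set b := star x ⬝ᵥ (K *ᵥ x) with hb
  have key : ∀ t : ℝ, 0 ≤ (t:ℂ) * a + (t:ℂ)^2 * b := by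
    intro t
    have := (h t).dotProduct_mulVec_nonneg x
    simpa [Matrix.add_mulVec, Matrix.smul_mulVec, dotProduct_add,
      dotProduct_smul, smul_eq_mul, ha, hb] using this
  have him : a.im = 0 := by
    have k1 := (Complex.nonneg_iff.mp (key 1)).2
    have k2 := (Complex.nonneg_iff.mp (key (-1))).2
    simp [Complex.add_im, Complex.mul_im] at k1 k2
    linarith
  have hbim : b.im = 0 := by
    have k1 := (Complex.nonneg_iff.mp (key 1)).2
    simp [Complex.add_im, Complex.mul_im] at k1
    linarith
  have hbre : 0 ≤ b.re := by
    have k1 := (Complex.nonneg_iff.mp (key 1)).1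
    have k2 := (Complex.nonneg_iff.mp (key (-1))).1
    simp [Complex.add_re, Complex.mul_re, him, hbim] at k1 k2
    linarith
  have hre : a.re = 0 := by
    apply scalar_aux hbre
    intro t
    have := (Complex.nonneg_iff.mp (key t)).1
    simpa [Complex.add_re, Complex.mul_re, him, hbim, pow_two] using this
  exact Complex.ext hre him

/-- Operative content of the paper's Theorem 3.5: if a positive linear map `E`
satisfying the Schwarz inequality kills `1 - p` for an orthogonal projection `p`,
then `E(p a p) = E(a)` for all `a`. -/
theorem schwarz_reducing {n m : ℕ}
    (E : Matrix (Fin n) (Fin n) ℂ →ₗ[ℂ] Matrix (Fin m) (Fin m) ℂ)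
    (hpos : ∀ a : Matrix (Fin n) (Fin n) ℂ, a.PosSemidef → (E a).PosSemidef)
    (hschwarz : ∀ b : Matrix (Fin n) (Fin n) ℂ, (E (bᴴ * b) - (E b)ᴴ * (E b)).PosSemidef)
    (p : Matrix (Fin n) (Fin n) ℂ) (hp1 : pᴴ = p) (hp2 : p * p = p)
    (hEp : E (1 - p) = 0) :
    ∀ a : Matrix (Fin n) (Fin n) ℂ, E (p * a * p) = E a := by
  set q : Matrix (Fin n) (Fin n) ℂ := 1 - p with hq
  have hq1 : qᴴ = q := by simp [hq, hp1]
  have hq2 : q * q = q := by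
    simp only [hq, Matrix.sub_mul, Matrix.mul_sub, Matrix.one_mul, Matrix.mul_one, hp2]
    abel
  have hEq : E q = 0 := hEp
  have key : ∀ c : Matrix (Fin n) (Fin n) ℂ, E (q * c + cᴴ * q) = 0 := by
    intro c
    apply psd_family_zero _ (E (cᴴ * c))
    intro t
    have hexp : (q + (t:ℂ) • c)ᴴ * (q + (t:ℂ) • c)
        = q + (t:ℂ) • (q * c + cᴴ * q) + ((t:ℂ))^2 • (cᴴ * c) := by
      simp only [conjTranspose_add, conjTranspose_smul, hq1, Complex.star_def,
        Complex.conj_ofReal, Matrix.add_mul, Matrix.mul_add, hq2,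
        Matrix.smul_mul, Matrix.mul_smul, smul_add, smul_smul]
      rw [pow_two]
      abel
    have := hpos _ (Matrix.posSemidef_conjTranspose_mul_self (q + (t:ℂ) • c))
    rw [hexp] at this
    simpa [map_add, _root_.map_smul, hEq] using this
  have keyL : ∀ c : Matrix (Fin n) (Fin n) ℂ, E (q * c) = 0 := by
    intro c
    have h1' : E (q * c) + E (cᴴ * q) = 0 := by rw [← map_add]; exact key c
    have h2 := key (Complex.I • c)
    rw [conjTranspose_smul, Complex.star_def, Complex.conj_I, Matrix.mul_smul,
      Matrix.smul_mul, map_add, _root_.map_smul, _root_.map_smul, neg_smul] at h2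
    have h3 : E (q * c) - E (cᴴ * q) = 0 := by
      have h2' : Complex.I • (E (q * c) - E (cᴴ * q)) = 0 := by
        rw [smul_sub]; simpa [sub_eq_add_neg] using h2
      rcases smul_eq_zero.mp h2' with h | h
      · exact absurd h Complex.I_ne_zero
      · exact h
    have h4 : E (q * c) + E (q * c) = (E (q * c) + E (cᴴ * q)) + (E (q * c) - E (cᴴ * q)) := by
      abel
    rw [h1', h3, add_zero] at h4
    have h5 : (2:ℂ) • E (q * c) = 0 := by rw [two_smul]; exact h4
    exact (smul_eq_zero.mp h5).resolve_left two_ne_zero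
  have keyR : ∀ c : Matrix (Fin n) (Fin n) ℂ, E (c * q) = 0 := by
    intro c
    have h1' : E (q * cᴴ) + E ((cᴴ)ᴴ * q) = 0 := by rw [← map_add]; exact key cᴴ
    rw [conjTranspose_conjTranspose, keyL cᴴ, zero_add] at h1'
    exact h1'
  intro a
  have hd : p * a * p = a - q * a - a * q + q * (a * q) := by
    simp only [hq]
    noncomm_ring
  rw [hd, map_add, map_sub, map_sub, keyL a, keyR a, keyL (a * q)]
  simp
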